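/- Let u : [1,∞) → (0,∞) be locally absolutely continuous with lim_{t→∞} t·u'(t)/u(t) = 0, and let θ > 0. Then for all sufficiently large s ≥ 1 the equation t^θ·u(t) = s has a unique solution t(s) ≥ 1, and t(s) is asymptotically equal (up to constants depending on θ and u) to s^{1/θ}·φ(s), where φ is some locally absolutely continuous function with lim_{s→∞} s·φ'(s)/φ(s) = 0. -/

import Mathlib

open MeasureTheory Filter Set intervalIntegral

lemma gron (v u' : ℝ → ℝ) (hv : Continuous v) (hvpos : ∀ x, 0 < v x)
    (hftc : ∀ a b : ℝ, 1 ≤ a → a ≤ b → v b - v a = ∫ x in a..b, u' x)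
    (hint : ∀ a b : ℝ, 1 ≤ a → a ≤ b → IntervalIntegrable u' volume a b)
    (ε T : ℝ) (hε : 0 < ε) (hT : 1 ≤ T)
    (hb : ∀ x ≥ T, |u' x| ≤ ε * v x / x)
    {a b : ℝ} (ha : T ≤ a) (hab : a ≤ b) :
    v b ≤ v a * (b/a)^ε ∧ v a ≤ v b * (b/a)^ε := by
  have ha1 : (1:ℝ) ≤ a := hT.trans ha
  have ha0 : (0:ℝ) < a := lt_of_lt_of_le one_pos ha1
  have hb0 : (0:ℝ) < b := lt_of_lt_of_le ha0 hab
  set q : ℝ → ℝ := fun t => v t / max t 1 with hq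
  have hqc : Continuous q := by
    apply hv.div (continuous_max.comp (continuous_id.prodMk continuous_const)) ?_
    · intro x
      have : (1:ℝ) ≤ max x 1 := le_max_right _ _
      positivity
  have hqeq : ∀ t, 1 ≤ t → q t = v t / t := by
    intro t ht; simp [hq, max_eq_left ht]
  have hqpos : ∀ t, 0 < q t := by
    intro t
    have h1 : (0:ℝ) < max t 1 := lt_of_lt_of_le one_pos (le_max_right _ _)
    exact div_pos (hvpos t) h1
  set w : ℝ → ℝ := fun x => ∫ t in a..x, q t with hw
  have hwd : ∀ x : ℝ, HasDerivAt w (q x) x := fun x =>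
    (hqc.integral_hasStrictDerivAt a x).hasDerivAt
  have hwc : Continuous w :=
    continuous_iff_continuousAt.2 fun x => (hwd x).continuousAt
  have hclaim1 : ∀ x, x ∈ Icc a b → v x ≤ v a + ε * w x := by
    intro x hx
    have hax : a ≤ x := hx.1
    have hub : v x - v a ≤ ε * w x := by
      rw [hftc a x ha1 hax]
      have : ∫ t in a..x, u' t ≤ ∫ t in a..x, ε * q t := by
        apply intervalIntegral.integral_mono_on hax (hint a x ha1 hax)
          ((continuous_const.mul hqc).intervalIntegrable _ _)
        intro t ht
        have ht1 : (1:ℝ) ≤ t := ha1.trans ht.1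
        have htT : T ≤ t := ha.trans ht.1
        have := hb t htT
        show u' t ≤ ε * q t
        rw [hqeq t ht1]
        calc u' t ≤ |u' t| := le_abs_self _
        _ ≤ ε * v t / t := this
        _ = ε * (v t / t) := by ring
      simpa [hw, intervalIntegral.integral_const_mul] using this
    linarith
  -- upper bound : v b ≤ v a * (b/a)^ε
  have hFa : ∀ x, x ∈ Ioo a b → HasDerivAt (fun x => (v a + ε * w x) * x ^ (-ε))
      ((ε * q x) * x ^ (-ε) + (v a + ε * w x) * (-ε * x ^ (-ε - 1))) x := by
    intro x hx
    have hx0 : x ≠ 0 := ne_of_gt (lt_trans ha0 hx.1)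
    have h1 : HasDerivAt (fun x => v a + ε * w x) (ε * q x) x := by
      simpa using (hwd x).const_mul ε
    have h2 : HasDerivAt (fun x : ℝ => x ^ (-ε)) (-ε * x ^ (-ε - 1)) x :=
      Real.hasDerivAt_rpow_const (Or.inl hx0)
    exact h1.mul h2
  have hdiv : (b/a)^ε = b^ε * a^(-ε) := by
    rw [Real.div_rpow hb0.le ha0.le, Real.rpow_neg ha0.le, div_eq_mul_inv]
  have hbb : b ^ (-ε) * b ^ ε = 1 := by
    rw [← Real.rpow_add hb0]; simp
  have haa : a ^ (-ε) * a ^ ε = 1 := by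
    rw [← Real.rpow_add ha0]; simp
  constructor
  · -- upper bound
    have hanti : AntitoneOn (fun x => (v a + ε * w x) * x ^ (-ε)) (Icc a b) := by
      apply antitoneOn_of_deriv_nonpos (convex_Icc a b)
      · apply ContinuousOn.mul (continuous_const.add (continuous_const.mul hwc)).continuousOn
        intro x hx
        have hx0 : x ≠ 0 := ne_of_gt (lt_of_lt_of_le ha0 hx.1)
        exact (Real.continuousAt_rpow_const x _ (Or.inl hx0)).continuousWithinAt
      · rw [interior_Icc]; intro x hx
        exact (hFa x hx).differentiableAt.differentiableWithinAt
      · rw [interior_Icc]; intro x hx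
        rw [(hFa x hx).deriv]
        have hxpos : (0:ℝ) < x := lt_of_lt_of_le ha0 hx.1.le
        have hx1 : (1:ℝ) ≤ x := ha1.trans hx.1.le
        have h1 := hclaim1 x (Ioo_subset_Icc_self hx)
        have hpow : x ^ (-ε) = x * x ^ (-ε - 1) := by
          have h2 : x ^ ((1:ℝ) + (-ε - 1)) = x ^ (1:ℝ) * x ^ (-ε - 1) :=
            Real.rpow_add hxpos 1 (-ε - 1)
          rw [Real.rpow_one] at h2
          rw [← h2]; norm_num
        rw [hqeq x hx1, hpow]
        have e1 : ε * (v x / x) * (x * x ^ (-ε - 1)) + (v a + ε * w x) * (-ε * x ^ (-ε-1))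
            = (ε * x ^ (-ε-1)) * (v x - (v a + ε * w x)) := by
          field_simp; ring
        rw [e1]
        apply mul_nonpos_of_nonneg_of_nonpos (by positivity) (by linarith)
    have hFba := hanti (left_mem_Icc.2 hab) (right_mem_Icc.2 hab) hab
    have hwa : w a = 0 := intervalIntegral.integral_same
    have h2 : v a + ε * w b ≤ v a * a ^ (-ε) * b ^ ε := by
      have := mul_le_mul_of_nonneg_right hFba (Real.rpow_pos_of_pos hb0 ε).le
      calc v a + ε * w b = (v a + ε * w b) * (b ^ (-ε) * b ^ ε) := by rw [hbb]; ring
      _ = (v a + ε * w b) * b ^ (-ε) * b ^ ε := by ring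
      _ ≤ (v a + ε * w a) * a ^ (-ε) * b ^ ε := this
      _ = v a * a ^ (-ε) * b ^ ε := by rw [hwa]; ring
    calc v b ≤ v a + ε * w b := hclaim1 b (right_mem_Icc.2 hab)
    _ ≤ v a * a ^ (-ε) * b ^ ε := h2
    _ = v a * (b/a)^ε := by rw [hdiv]; ring
  · -- lower bound: v a ≤ v b * (b/a)^ε
    have hclaim2 : ∀ x ∈ Icc a b, v x ≤ v b + ε * (w b - w x) := by
      intro x hx
      have hx1 : (1:ℝ) ≤ x := ha1.trans hx.1
      have hwbx : w b - w x = ∫ t in x..b, q t := by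
        have h3 := intervalIntegral.integral_add_adjacent_intervals
          (hqc.intervalIntegrable a x : IntervalIntegrable q volume a x)
          (hqc.intervalIntegrable x b : IntervalIntegrable q volume x b)
        simp only [hw]; linarith [h3]
      have hfb : v b - v x = ∫ t in x..b, u' t := hftc x b hx1 hx.2
      have hmono : ∫ t in x..b, -(u' t) ≤ ∫ t in x..b, ε * q t := by
        apply intervalIntegral.integral_mono_on hx.2 ((hint x b hx1 hx.2).neg)
          ((continuous_const.mul hqc).intervalIntegrable _ _)
        intro t ht
        have ht1 : (1:ℝ) ≤ t := hx1.trans ht.1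
        have htT : T ≤ t := ha.trans (hx.1.trans ht.1)
        have hb' := hb t htT
        show -(u' t) ≤ ε * q t
        rw [hqeq t ht1]
        calc -(u' t) ≤ |u' t| := neg_le_abs _
        _ ≤ ε * v t / t := hb'
        _ = ε * (v t / t) := by ring
      rw [intervalIntegral.integral_neg] at hmono
      rw [intervalIntegral.integral_const_mul] at hmono
      rw [← hwbx] at hmono
      linarith [hfb ▸ hmono]
    have hGa : ∀ x, x ∈ Ioo a b → HasDerivAt (fun x => (v b + ε * (w b - w x)) * x ^ ε)
        ((-(ε * q x)) * x ^ ε + (v b + ε * (w b - w x)) * (ε * x ^ (ε - 1))) x := by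
      intro x hx
      have hx0 : x ≠ 0 := ne_of_gt (lt_of_lt_of_le ha0 hx.1.le)
      have h1 : HasDerivAt (fun x => v b + ε * (w b - w x)) (-(ε * q x)) x := by
        have := ((hasDerivAt_const x (w b)).sub (hwd x)).const_mul ε
        simpa using this
      exact h1.mul (Real.hasDerivAt_rpow_const (Or.inl hx0))
    have hmon : MonotoneOn (fun x => (v b + ε * (w b - w x)) * x ^ ε) (Icc a b) := by
      apply monotoneOn_of_deriv_nonneg (convex_Icc a b)
      · apply ContinuousOn.mul
          (continuous_const.add (continuous_const.mul (continuous_const.sub hwc))).continuousOn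
        intro x hx
        have hx0 : x ≠ 0 := ne_of_gt (lt_of_lt_of_le ha0 hx.1)
        exact (Real.continuousAt_rpow_const x _ (Or.inl hx0)).continuousWithinAt
      · rw [interior_Icc]; intro x hx
        exact (hGa x hx).differentiableAt.differentiableWithinAt
      · rw [interior_Icc]; intro x hx
        rw [(hGa x hx).deriv]
        have hxpos : (0:ℝ) < x := lt_of_lt_of_le ha0 hx.1.le
        have hx1 : (1:ℝ) ≤ x := ha1.trans hx.1.le
        have h1 := hclaim2 x (Ioo_subset_Icc_self hx)
        have hpow : x ^ ε = x * x ^ (ε - 1) := by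
          have h2 : x ^ ((1:ℝ) + (ε - 1)) = x ^ (1:ℝ) * x ^ (ε - 1) :=
            Real.rpow_add hxpos 1 (ε - 1)
          rw [Real.rpow_one] at h2
          rw [← h2]; norm_num
        rw [hqeq x hx1, hpow]
        have e1 : (-(ε * (v x / x))) * (x * x ^ (ε - 1)) + (v b + ε * (w b - w x)) * (ε * x ^ (ε-1))
            = (ε * x ^ (ε-1)) * ((v b + ε * (w b - w x)) - v x) := by
          field_simp; ring
        rw [e1]
        apply mul_nonneg (by positivity) (by linarith)
    have hGab := hmon (left_mem_Icc.2 hab) (right_mem_Icc.2 hab) hab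
    have hwa : w a = 0 := intervalIntegral.integral_same
    have hGb : (v b + ε * (w b - w b)) * b ^ ε = v b * b ^ ε := by simp
    calc v a ≤ v b + ε * (w b - w a) := hclaim2 a (left_mem_Icc.2 hab)
    _ = (v b + ε * (w b - w a)) * a ^ ε * a ^ (-ε) := by
        rw [mul_assoc, mul_comm (a ^ ε), haa, mul_one]
    _ ≤ v b * b ^ ε * a ^ (-ε) := by
        apply mul_le_mul_of_nonneg_right _ (Real.rpow_pos_of_pos ha0 _).le
        rw [← hGb]; exact hGab
    _ = v b * (b/a)^ε := by rw [hdiv]; ring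

set_option maxHeartbeats 2000000
theorem stmt6 (u u' : ℝ → ℝ) (θ : ℝ) (hθ : 0 < θ)
    (hpos : ∀ t ≥ (1:ℝ), 0 < u t)
    (hftc : ∀ t ≥ (1:ℝ), u t = u 1 + ∫ s in (1:ℝ)..t, u' s)
    (hint : ∀ t ≥ (1:ℝ), IntervalIntegrable u' volume 1 t)
    (hlim : Tendsto (fun t => t * u' t / u t) atTop (nhds 0)) :
    ∃ s₀ ≥ (1:ℝ), ∃ t : ℝ → ℝ, ∃ φ φ' : ℝ → ℝ, ∃ c₁ > (0:ℝ), ∃ c₂ > (0:ℝ),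
      (∀ s ≥ s₀, 1 ≤ t s ∧ t s ^ θ * u (t s) = s ∧
        ∀ t' : ℝ, 1 ≤ t' → t' ^ θ * u t' = s → t' = t s) ∧
      (∀ s ≥ s₀, 0 < φ s) ∧
      (∀ s ≥ s₀, φ s = φ s₀ + ∫ x in s₀..s, φ' x) ∧
      (∀ s ≥ s₀, IntervalIntegrable φ' volume s₀ s) ∧
      Tendsto (fun s => s * φ' s / φ s) atTop (nhds 0) ∧
      ∀ s ≥ s₀, c₁ * s ^ (1/θ) * φ s ≤ t s ∧ t s ≤ c₂ * s ^ (1/θ) * φ s := by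
  classical
  -- the primitive of u'
  set P : ℝ → ℝ := fun x => ∫ s in (1:ℝ)..x, u' s with hP
  have hPcont : ContinuousOn P (Ici 1) := by
    intro x hx
    have h1 : ContinuousWithinAt P (Icc 1 (x+1)) x := by
      apply intervalIntegral.continuousWithinAt_primitive (measure_singleton x)
      have : IntervalIntegrable u' volume 1 (max 1 (x+1)) :=
        hint _ (le_max_left _ _)
      simpa [min_self] using this
    apply h1.mono_of_mem_nhdsWithin
    rw [← Ici_inter_Iic]
    apply Filter.inter_mem self_mem_nhdsWithin
    exact nhdsWithin_le_nhds (Iic_mem_nhds (by linarith [mem_Ici.1 hx]))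
  set v : ℝ → ℝ := fun x => u 1 + P (max x 1) with hv
  have hveq : ∀ x : ℝ, 1 ≤ x → v x = u x := by
    intro x hx
    rw [hftc x hx]; simp [hv, hP, max_eq_left hx]
  have hvc : Continuous v := by
    apply continuous_const.add
    apply hPcont.comp_continuous (continuous_max.comp (continuous_id.prodMk continuous_const))
    intro x; exact mem_Ici.2 (le_max_right _ _)
  have hvpos : ∀ x, 0 < v x := by
    intro x
    have h1 := hpos (max x 1) (le_max_right _ _)
    rw [← hveq _ (le_max_right x 1)] at h1
    simpa [hv, max_assoc] using h1
  have hvftc : ∀ a b : ℝ, 1 ≤ a → a ≤ b → v b - v a = ∫ x in a..b, u' x := by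
    intro a b ha hab
    have hb : (1:ℝ) ≤ b := ha.trans hab
    have h3 := intervalIntegral.integral_add_adjacent_intervals
      (hint a ha) ((hint b hb).mono_set (uIcc_subset_uIcc
        (by rw [mem_uIcc]; exact Or.inl ⟨ha, hab⟩)
        (by rw [mem_uIcc]; exact Or.inl ⟨hb, le_rfl⟩)))
    simp only [hv, hP, max_eq_left ha, max_eq_left hb]
    linarith [h3]
  have hvint : ∀ a b : ℝ, 1 ≤ a → a ≤ b → IntervalIntegrable u' volume a b := by
    intro a b ha hab
    have hb : (1:ℝ) ≤ b := ha.trans hab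
    exact (hint b hb).mono_set (uIcc_subset_uIcc
      (by rw [mem_uIcc]; exact Or.inl ⟨ha, hab⟩)
      (by rw [mem_uIcc]; exact Or.inl ⟨hb, le_rfl⟩))
  have hbound : ∀ ε : ℝ, 0 < ε → ∀ C : ℝ, ∃ T : ℝ, 1 ≤ T ∧ C ≤ T ∧
      ∀ x ≥ T, |u' x| ≤ ε * v x / x := by
    intro ε hε C
    have h1 : ∀ᶠ x in atTop, |x * u' x / u x| < ε := by
      have h0 := Metric.tendsto_nhds.mp hlim ε hε
      filter_upwards [h0] with x hx
      rwa [Real.dist_eq, sub_zero] at hx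
    rcases (h1.and (eventually_ge_atTop (max 1 C))).exists_forall_of_atTop with ⟨T₁, hT₁⟩
    refine ⟨max T₁ (max 1 C), le_max_of_le_right (le_max_left _ _),
      le_max_of_le_right (le_max_right _ _), ?_⟩
    intro x hx
    have hx1 : (1:ℝ) ≤ x := le_trans (le_max_of_le_right (le_max_left 1 C)) hx
    have hx0 : (0:ℝ) < x := lt_of_lt_of_le one_pos hx1
    have h2 := (hT₁ x (le_trans (le_max_left _ _) hx)).1
    have hux : 0 < u x := hpos x hx1
    rw [hveq x hx1]
    rw [abs_div, abs_mul, abs_of_pos hx0, abs_of_pos hux, div_lt_iff₀ hux] at h2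
    rw [le_div_iff₀ hx0]
    nlinarith [abs_nonneg (u' x)]
  set ε₀ : ℝ := θ/2 with hε₀
  have hε₀pos : 0 < ε₀ := by positivity
  have hθε : 0 < θ - ε₀ := by rw [hε₀]; linarith
  obtain ⟨T₀, hT₀1, -, hT₀b⟩ := hbound ε₀ hε₀pos 1
  set g : ℝ → ℝ := fun x => x ^ θ * v x with hg
  have hgpos : ∀ x : ℝ, 0 < x → 0 < g x := fun x hx =>
    mul_pos (Real.rpow_pos_of_pos hx θ) (hvpos x)
  have hgg : ∀ ε T' : ℝ, 0 < ε → ε < θ → 1 ≤ T' →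
      (∀ x ≥ T', |u' x| ≤ ε * v x / x) → ∀ a b : ℝ, T' ≤ a → a ≤ b →
      g a * (b/a) ^ (θ - ε) ≤ g b ∧ g b ≤ g a * (b/a) ^ (θ + ε) := by
    intro ε T' hε hεθ hT' hbd a b ha hab
    have ha1 : (1:ℝ) ≤ a := hT'.trans ha
    have ha0 : (0:ℝ) < a := lt_of_lt_of_le one_pos ha1
    have hb0 : (0:ℝ) < b := lt_of_lt_of_le ha0 hab
    have hba1 : (1:ℝ) ≤ b/a := (one_le_div ha0).2 hab
    have hba0 : (0:ℝ) < b/a := lt_of_lt_of_le one_pos hba1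
    obtain ⟨h1, h2⟩ := gron v u' hvc hvpos hvftc hvint ε T' hε hT' hbd ha hab
    have hbθ : b ^ θ = a ^ θ * (b/a) ^ θ := by
      rw [← Real.mul_rpow ha0.le hba0.le]
      congr 1
      field_simp
    constructor
    · have h3 : (b/a) ^ (θ - ε) * (b/a) ^ ε = (b/a) ^ θ := by
        rw [← Real.rpow_add hba0]; ring_nf
      calc g a * (b/a)^(θ-ε) = a^θ * (b/a)^(θ-ε) * v a := by rw [hg]; ring
      _ ≤ a^θ * (b/a)^(θ-ε) * (v b * (b/a)^ε) := by
          apply mul_le_mul_of_nonneg_left h2 (by positivity)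
      _ = b ^ θ * v b := by rw [hbθ, ← h3]; ring
      _ = g b := rfl
    · have h3 : (b/a) ^ θ * (b/a) ^ ε = (b/a) ^ (θ + ε) := by
        rw [← Real.rpow_add hba0]
      calc g b = b^θ * v b := rfl
      _ ≤ b^θ * (v a * (b/a)^ε) := by
          apply mul_le_mul_of_nonneg_left h1 (by positivity)
      _ = g a * (b/a)^(θ+ε) := by rw [hbθ, ← h3, hg]; ring
  have hε₀θ : ε₀ < θ := by rw [hε₀]; linarith
  have hgmono : ∀ a b : ℝ, T₀ ≤ a → a < b → g a < g b := by
    intro a b ha hab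
    have ha1 : (1:ℝ) ≤ a := hT₀1.trans ha
    have ha0 : (0:ℝ) < a := lt_of_lt_of_le one_pos ha1
    have h1 := (hgg ε₀ T₀ hε₀pos hε₀θ hT₀1 hT₀b a b ha hab.le).1
    have hba : 1 < b/a := (one_lt_div ha0).2 hab
    have h2 : (1:ℝ) < (b/a) ^ (θ - ε₀) :=
      Real.one_lt_rpow_iff_of_pos (by positivity) |>.2 (Or.inl ⟨hba, hθε⟩)
    calc g a = g a * 1 := (mul_one _).symm
    _ < g a * (b/a)^(θ-ε₀) := by
        exact mul_lt_mul_of_pos_left h2 (hgpos a ha0)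
    _ ≤ g b := h1
  have hgcont : ContinuousOn g (Ici 1) := by
    intro x hx
    have hx0 : x ≠ 0 := by
      have := mem_Ici.1 hx; intro h; rw [h] at this; linarith
    exact ((Real.continuousAt_rpow_const x θ (Or.inl hx0)).mul
      hvc.continuousAt).continuousWithinAt
  set M := sSup (g '' Icc 1 T₀) with hM
  have hMba : BddAbove (g '' Icc 1 T₀) :=
    (isCompact_Icc.image_of_continuousOn (hgcont.mono Icc_subset_Ici_self)).bddAbove
  have hMub : ∀ x ∈ Icc (1:ℝ) T₀, g x ≤ M := fun x hx => le_csSup hMba (mem_image_of_mem g hx)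
  set s₀ := M + 1 with hs₀
  have hg1pos : 0 < g 1 := hgpos 1 one_pos
  have hs₀1 : 1 < s₀ := by
    have := hMub 1 ⟨le_rfl, hT₀1⟩
    rw [hs₀]; linarith
  have hgT₀M : g T₀ ≤ M := hMub T₀ ⟨hT₀1, le_rfl⟩
  have hex : ∀ s : ℝ, s₀ ≤ s → ∃ x, T₀ ≤ x ∧ g x = s := by
    intro s hs
    have hsg : g T₀ ≤ s := by linarith
    have hspos : (0:ℝ) < s := by linarith
    have hgT₀pos : 0 < g T₀ := hgpos T₀ (by linarith)
    set X := T₀ * (2 * s / g T₀) ^ (1/(θ - ε₀)) with hX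
    have hr1 : (1:ℝ) ≤ 2*s/g T₀ := by rw [le_div_iff₀ hgT₀pos]; linarith
    have hrX : (1:ℝ) ≤ (2*s/g T₀) ^ (1/(θ-ε₀)) := by
      calc (1:ℝ) = 1 ^ (1/(θ-ε₀)) := (Real.one_rpow _).symm
      _ ≤ (2*s/g T₀) ^ (1/(θ-ε₀)) :=
          Real.rpow_le_rpow zero_le_one hr1 (by positivity)
    have hXT : T₀ ≤ X := by
      calc T₀ = T₀ * 1 := (mul_one _).symm
      _ ≤ X := by rw [hX]; apply mul_le_mul_of_nonneg_left hrX (by linarith)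
    have hgX : s ≤ g X := by
      have h1 := (hgg ε₀ T₀ hε₀pos hε₀θ hT₀1 hT₀b T₀ X le_rfl hXT).1
      have hT₀pos : (0:ℝ) < T₀ := by linarith
      have hXd : X / T₀ = (2*s/g T₀) ^ (1/(θ-ε₀)) := by
        rw [hX]; field_simp
      have h2 : ((2*s/g T₀) ^ (1/(θ-ε₀))) ^ (θ-ε₀) = 2*s/g T₀ := by
        rw [one_div, Real.rpow_inv_rpow (by positivity) (ne_of_gt hθε)]
      rw [hXd, h2] at h1
      have : g T₀ * (2*s/g T₀) = 2*s := by field_simp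
      rw [this] at h1
      linarith
    obtain ⟨x, hx, hgx⟩ := intermediate_value_Icc hXT
      (hgcont.mono (Icc_subset_Ici_self.trans (Ici_subset_Ici.2 hT₀1))) ⟨hsg, hgX⟩
    exact ⟨x, hx.1, hgx⟩
  set tF : ℝ → ℝ := fun s => if h : ∃ x, T₀ ≤ x ∧ g x = s then h.choose else 1 with htF
  have htFspec : ∀ s : ℝ, s₀ ≤ s → T₀ ≤ tF s ∧ g (tF s) = s := by
    intro s hs
    have h := hex s hs
    simp only [htF, dif_pos h]
    exact h.choose_spec
  have huniq : ∀ s : ℝ, s₀ ≤ s → ∀ x : ℝ, 1 ≤ x → g x = s → x = tF s := by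
    intro s hs x hx hgx
    obtain ⟨ht1, ht2⟩ := htFspec s hs
    rcases lt_trichotomy x (tF s) with h | h | h
    · exfalso
      rcases lt_or_ge x T₀ with h' | h'
      · have := hMub x ⟨hx, h'.le⟩; rw [hgx] at this; linarith
      · have := hgmono x (tF s) h' h; rw [hgx, ht2] at this; exact lt_irrefl _ this
    · exact h
    · exfalso
      have := hgmono (tF s) x ht1 h; rw [hgx, ht2] at this; exact lt_irrefl _ this
  have hkey : ∀ ε T' : ℝ, 0 < ε → ε < θ → T₀ ≤ T' → (∀ x ≥ T', |u' x| ≤ ε * v x / x) →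
      ∀ s s' : ℝ, s₀ ≤ s → g T' ≤ s → s ≤ s' →
      (Real.log s' - Real.log s)/(θ+ε) ≤ Real.log (tF s') - Real.log (tF s) ∧
      Real.log (tF s') - Real.log (tF s) ≤ (Real.log s' - Real.log s)/(θ-ε) := by
    intro ε T' hε hεθ hT' hbd s s' hs hsT hss'
    have hT'1 : (1:ℝ) ≤ T' := hT₀1.trans hT'
    obtain ⟨hts1, hts2⟩ := htFspec s hs
    obtain ⟨hts1', hts2'⟩ := htFspec s' (hs.trans hss')
    have h1 : T' ≤ tF s := by
      by_contra h
      push_neg at h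
      have := hgmono (tF s) T' hts1 h
      rw [hts2] at this; linarith
    have h2 : tF s ≤ tF s' := by
      by_contra h
      push_neg at h
      have := hgmono (tF s') (tF s) hts1' h
      rw [hts2, hts2'] at this; linarith
    have ht10 : 0 < tF s := lt_of_lt_of_le one_pos (hT₀1.trans hts1)
    have ht20 : 0 < tF s' := lt_of_lt_of_le ht10 h2
    have hr0 : 0 < tF s' / tF s := div_pos ht20 ht10
    obtain ⟨hg1, hg2⟩ := hgg ε T' hε hεθ hT'1 hbd (tF s) (tF s') h1 h2
    rw [hts2, hts2'] at hg1 hg2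
    have hspos : 0 < s := by linarith
    have hlog1 : Real.log s + (θ-ε) * (Real.log (tF s') - Real.log (tF s)) ≤ Real.log s' := by
      have h3 := Real.log_le_log (mul_pos hspos (Real.rpow_pos_of_pos hr0 _)) hg1
      rw [Real.log_mul (ne_of_gt hspos) (ne_of_gt (Real.rpow_pos_of_pos hr0 _)),
        Real.log_rpow hr0, Real.log_div (ne_of_gt ht20) (ne_of_gt ht10)] at h3
      linarith
    have hlog2 : Real.log s' ≤ Real.log s + (θ+ε) * (Real.log (tF s') - Real.log (tF s)) := by
      have h3 := Real.log_le_log (by linarith : (0:ℝ) < s') hg2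
      rw [Real.log_mul (ne_of_gt hspos) (ne_of_gt (Real.rpow_pos_of_pos hr0 _)),
        Real.log_rpow hr0, Real.log_div (ne_of_gt ht20) (ne_of_gt ht10)] at h3
      linarith
    have hL0 : 0 ≤ Real.log (tF s') - Real.log (tF s) := by
      have := Real.log_le_log ht10 h2
      linarith
    constructor
    · rw [div_le_iff₀ (by linarith : (0:ℝ) < θ + ε)]
      nlinarith [hlog2]
    · rw [le_div_iff₀ (by linarith : (0:ℝ) < θ - ε)]
      nlinarith [hlog1]
  have hs₀pos : (0:ℝ) < s₀ := by linarith
  set x₀ := Real.log s₀ with hx₀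
  have hexpx : ∀ x : ℝ, s₀ ≤ Real.exp (max x x₀) := by
    intro x
    calc s₀ = Real.exp x₀ := (Real.exp_log hs₀pos).symm
    _ ≤ Real.exp (max x x₀) := Real.exp_le_exp.2 (le_max_right _ _)
  set ℓ : ℝ → ℝ := fun x => Real.log (tF (Real.exp (max x x₀))) with hℓ
  have hℓmono : ∀ x y : ℝ, x ≤ y →
      (max y x₀ - max x x₀)/(θ+ε₀) ≤ ℓ y - ℓ x ∧
      ℓ y - ℓ x ≤ (max y x₀ - max x x₀)/(θ-ε₀) := by
    intro x y hxy
    have h1 := hkey ε₀ T₀ hε₀pos hε₀θ le_rfl hT₀b (Real.exp (max x x₀))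
      (Real.exp (max y x₀)) (hexpx x) (by linarith [hexpx x])
      (Real.exp_le_exp.2 (max_le_max hxy le_rfl))
    rwa [Real.log_exp, Real.log_exp] at h1
  have hθε₀pos : (0:ℝ) < θ + ε₀ := by linarith
  have hℓdiff : ∀ x y : ℝ, x ≤ y → 0 ≤ ℓ y - ℓ x ∧ ℓ y - ℓ x ≤ (y - x)/(θ-ε₀) := by
    intro x y hxy
    obtain ⟨ha, hb⟩ := hℓmono x y hxy
    have hmm : max x x₀ ≤ max y x₀ := max_le_max hxy le_rfl
    have hm1 : max y x₀ - max x x₀ ≤ y - x := by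
      have h2 := abs_max_sub_max_le_abs y x x₀
      rw [abs_of_nonneg (by linarith : (0:ℝ) ≤ max y x₀ - max x x₀),
        abs_of_nonneg (by linarith : (0:ℝ) ≤ y - x)] at h2
      exact h2
    refine ⟨le_trans (div_nonneg (by linarith) (by linarith)) ha, le_trans hb ?_⟩
    rw [div_le_div_iff₀ hθε hθε]
    nlinarith
  have hℓcont : Continuous ℓ := by
    rw [Metric.continuous_iff]
    intro x δ hδ
    refine ⟨(θ - ε₀) * δ, by positivity, fun y hy => ?_⟩
    rw [Real.dist_eq] at hy ⊢
    rcases le_total x y with h | h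
    · obtain ⟨h0, h1⟩ := hℓdiff x y h
      rw [abs_of_nonneg (by linarith)]
      have h2 : y - x < (θ-ε₀)*δ := by
        linarith [le_abs_self (y - x)]
      calc ℓ y - ℓ x ≤ (y-x)/(θ-ε₀) := h1
      _ < δ := by rw [div_lt_iff₀ hθε]; nlinarith
    · obtain ⟨h0, h1⟩ := hℓdiff y x h
      rw [abs_of_nonpos (by linarith), neg_sub]
      have h2 : x - y < (θ-ε₀)*δ := by
        have h3 : |y - x| = |x - y| := abs_sub_comm _ _
        linarith [le_abs_self (x - y)]
      calc ℓ x - ℓ y ≤ (x-y)/(θ-ε₀) := h1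
      _ < δ := by rw [div_lt_iff₀ hθε]; nlinarith
  set hh : ℝ → ℝ := fun x => ℓ x - (max x x₀)/θ with hhh
  have hhcont : Continuous hh :=
    hℓcont.sub ((continuous_max.comp (continuous_id.prodMk continuous_const)).div_const θ)
  set Q : ℝ → ℝ := fun x => ∫ y in (0:ℝ)..x, hh y with hQ
  have hQd : ∀ x : ℝ, HasDerivAt Q (hh x) x := fun x =>
    (hhcont.integral_hasStrictDerivAt 0 x).hasDerivAt
  have hQc : Continuous Q := continuous_iff_continuousAt.2 fun x => (hQd x).continuousAt
  set H : ℝ → ℝ := fun x => Q (x+1) - Q x with hH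
  have hHc : Continuous H := (hQc.comp (continuous_id.add continuous_const)).sub hQc
  have hHd : ∀ x : ℝ, HasDerivAt H (hh (x+1) - hh x) x := by
    intro x
    have h1 : HasDerivAt (fun x : ℝ => Q (x+1)) (hh (x+1)) x := by
      have h2 := (hQd (x+1)).comp x ((hasDerivAt_id x).add_const 1)
      simpa [Function.comp_def] using h2
    exact h1.sub (hQd x)
  have hHval : ∀ x : ℝ, H x = ∫ y in x..(x+1), hh y := by
    intro x
    have h3 := intervalIntegral.integral_add_adjacent_intervals
      (hhcont.intervalIntegrable 0 x : IntervalIntegrable hh volume 0 x)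
      (hhcont.intervalIntegrable x (x+1) : IntervalIntegrable hh volume x (x+1))
    simp only [hH, hQ]
    linarith [h3]
  set φF : ℝ → ℝ := fun s => Real.exp (H (Real.log s)) with hφF
  set φ'F : ℝ → ℝ := fun s =>
    Real.exp (H (Real.log s)) * ((hh (Real.log s + 1) - hh (Real.log s)) * s⁻¹) with hφ'F
  have hφFd : ∀ s : ℝ, 0 < s → HasDerivAt φF (φ'F s) s := by
    intro s hs
    have h1 : HasDerivAt (fun s : ℝ => H (Real.log s))
        ((hh (Real.log s + 1) - hh (Real.log s)) * s⁻¹) s :=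
      (hHd (Real.log s)).comp s (Real.hasDerivAt_log (ne_of_gt hs))
    exact h1.exp
  have hφ'cont : ∀ x : ℝ, 0 < x → ContinuousAt φ'F x := by
    intro x hx
    have hlog : ContinuousAt Real.log x := Real.continuousAt_log (ne_of_gt hx)
    have c1 : ContinuousAt (fun s : ℝ => Real.exp (H (Real.log s))) x :=
      (Real.continuous_exp.comp hHc).continuousAt.comp hlog
    have c2 : ContinuousAt (fun s : ℝ => hh (Real.log s + 1) - hh (Real.log s)) x := by
      apply ContinuousAt.sub
      · exact hhcont.continuousAt.comp (hlog.add continuousAt_const)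
      · exact hhcont.continuousAt.comp hlog
    have c3 : ContinuousAt (fun s : ℝ => s⁻¹) x := continuousAt_inv₀ (ne_of_gt hx)
    exact c1.mul (c2.mul c3)
  have hφint : ∀ s : ℝ, s₀ ≤ s → IntervalIntegrable φ'F volume s₀ s := by
    intro s hs
    apply ContinuousOn.intervalIntegrable
    intro x hx
    rw [uIcc_of_le hs] at hx
    exact (hφ'cont x (lt_of_lt_of_le hs₀pos hx.1)).continuousWithinAt
  have hφFTC : ∀ s : ℝ, s₀ ≤ s → φF s = φF s₀ + ∫ x in s₀..s, φ'F x := by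
    intro s hs
    have h1 : ∀ x ∈ uIcc s₀ s, HasDerivAt φF (φ'F x) x := by
      intro x hx
      rw [uIcc_of_le hs] at hx
      exact hφFd x (lt_of_lt_of_le hs₀pos hx.1)
    have h2 := intervalIntegral.integral_eq_sub_of_hasDerivAt h1 (hφint s hs)
    rw [h2]; ring
  have htend0 : Tendsto (fun x => hh (x+1) - hh x) atTop (nhds 0) := by
    rw [Metric.tendsto_atTop]
    intro δ hδ
    have hεp : (0:ℝ) < min ε₀ (θ^2 * δ / 8) := lt_min hε₀pos (by positivity)
    set ε := min ε₀ (θ^2 * δ / 8) with hεdef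
    have hεe : ε ≤ ε₀ := min_le_left _ _
    have hεd : ε ≤ θ^2 * δ / 8 := min_le_right _ _
    have hεθ' : ε < θ := lt_of_le_of_lt hεe hε₀θ
    obtain ⟨T', hT'1, hT'2, hT'b⟩ := hbound ε hεp T₀
    refine ⟨max x₀ (Real.log (max s₀ (g T'))), ?_⟩
    intro x hx
    have hxx₀ : x₀ ≤ x := le_trans (le_max_left _ _) hx
    have hmx : max x x₀ = x := max_eq_left hxx₀
    have hmx1 : max (x+1) x₀ = x + 1 := max_eq_left (by linarith)
    have hss₀ : s₀ ≤ Real.exp x := by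
      have := hexpx x; rwa [hmx] at this
    have hsgT' : g T' ≤ Real.exp x := by
      have h2 : Real.log (max s₀ (g T')) ≤ x := le_trans (le_max_right _ _) hx
      have h3 : max s₀ (g T') ≤ Real.exp x := by
        calc max s₀ (g T') = Real.exp (Real.log (max s₀ (g T'))) :=
              (Real.exp_log (lt_of_lt_of_le hs₀pos (le_max_left _ _))).symm
        _ ≤ Real.exp x := Real.exp_le_exp.2 h2
      exact le_trans (le_max_right _ _) h3
    have h4 := hkey ε T' hεp hεθ' hT'2 hT'b (Real.exp x) (Real.exp (x+1)) hss₀ hsgT'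
      (Real.exp_le_exp.2 (by linarith))
    rw [Real.log_exp, Real.log_exp] at h4
    have h5 : x + 1 - x = 1 := by ring
    rw [h5] at h4
    obtain ⟨h6, h7⟩ := h4
    -- hh (x+1) - hh x = (ℓ (x+1) - ℓ x) - 1/θ
    have h8 : hh (x+1) - hh x =
        (Real.log (tF (Real.exp (x+1))) - Real.log (tF (Real.exp x))) - 1/θ := by
      simp only [hhh, hℓ, hmx, hmx1]
      ring
    rw [Real.dist_eq, sub_zero, h8]
    have hθεp : (0:ℝ) < θ - ε := by linarith
    have hθεp' : (0:ℝ) < θ + ε := by linarith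
    have hu1 : 1/(θ-ε) - 1/θ < δ := by
      rw [div_sub_div _ _ (ne_of_gt hθεp) (ne_of_gt hθ)]
      rw [div_lt_iff₀ (by positivity)]
      nlinarith [hεd, hδ, hθ, hεe, hε₀]
    have hu2 : 1/θ - 1/(θ+ε) < δ := by
      rw [div_sub_div _ _ (ne_of_gt hθ) (ne_of_gt hθεp')]
      rw [div_lt_iff₀ (by positivity)]
      nlinarith [hεd, hδ, hθ]
    rw [abs_lt]
    constructor
    · have : 1/(θ+ε) ≤ Real.log (tF (Real.exp (x+1))) - Real.log (tF (Real.exp x)) := by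
        simpa using h6
      linarith
    · have : Real.log (tF (Real.exp (x+1))) - Real.log (tF (Real.exp x)) ≤ 1/(θ-ε) := by
        simpa using h7
      linarith
  have htendφ : Tendsto (fun s => s * φ'F s / φF s) atTop (nhds 0) := by
    have h1 : Tendsto (fun s : ℝ => hh (Real.log s + 1) - hh (Real.log s)) atTop (nhds 0) :=
      htend0.comp Real.tendsto_log_atTop
    apply h1.congr'
    filter_upwards [eventually_gt_atTop 0] with s hs
    have hE : Real.exp (H (Real.log s)) ≠ 0 := ne_of_gt (Real.exp_pos _)
    simp only [hφ'F, hφF]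
    field_simp
  have h1θ3 : ∀ c d : ℝ, 0 ≤ c → c ≤ d → c/θ ≤ d/θ := by
    intro c d hc hcd
    rw [div_le_div_iff₀ hθ hθ]; nlinarith
  have hC : ∀ x y : ℝ, x ≤ y → y ≤ x + 1 → |hh y - hh x| ≤ 3/θ := by
    intro x y hxy hy1
    obtain ⟨h0, h1⟩ := hℓdiff x y hxy
    have hmm : max x x₀ ≤ max y x₀ := max_le_max hxy le_rfl
    have hm1 : max y x₀ - max x x₀ ≤ y - x := by
      have h2 := abs_max_sub_max_le_abs y x x₀
      rw [abs_of_nonneg (by linarith : (0:ℝ) ≤ max y x₀ - max x x₀),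
        abs_of_nonneg (by linarith : (0:ℝ) ≤ y - x)] at h2
      exact h2
    have hee : (y - x)/(θ - ε₀) = 2*(y-x)/θ := by
      rw [div_eq_div_iff (ne_of_gt hθε) (ne_of_gt hθ), hε₀]
      ring
    have h3 : hh y - hh x = (ℓ y - ℓ x) - (max y x₀ - max x x₀)/θ := by
      simp only [hhh]; ring
    have hA : 0 ≤ (max y x₀ - max x x₀)/θ := div_nonneg (by linarith) hθ.le
    have hB : (max y x₀ - max x x₀)/θ ≤ 3/θ := h1θ3 _ _ (by linarith) (by linarith)
    have hCr : ℓ y - ℓ x ≤ 3/θ := by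
      rw [hee] at h1
      exact le_trans h1 (h1θ3 _ _ (by linarith) (by linarith))
    rw [h3, abs_le]
    exact ⟨by linarith, by linarith⟩
  have hHhh : ∀ x : ℝ, |H x - hh x| ≤ 3/θ := by
    intro x
    rw [hHval x]
    have h1 : (∫ y in x..(x+1), hh y) - hh x = ∫ y in x..(x+1), (hh y - hh x) := by
      rw [intervalIntegral.integral_sub (hhcont.intervalIntegrable _ _)
        intervalIntegrable_const]
      simp
    rw [h1]
    have h3 : ∀ y ∈ uIoc x (x+1), ‖hh y - hh x‖ ≤ 3/θ := by
      intro y hy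
      rw [uIoc_of_le (by linarith)] at hy
      rw [Real.norm_eq_abs]
      exact hC x y hy.1.le hy.2
    have h4 := intervalIntegral.norm_integral_le_of_norm_le_const h3
    rw [Real.norm_eq_abs] at h4
    simpa using h4
  have hcomp : ∀ s : ℝ, s₀ ≤ s →
      Real.exp (-(3/θ)) * s ^ (1/θ) * φF s ≤ tF s ∧
      tF s ≤ Real.exp (3/θ) * s ^ (1/θ) * φF s := by
    intro s hs
    have hsp : (0:ℝ) < s := lt_of_lt_of_le hs₀pos hs
    have hxx₀ : x₀ ≤ Real.log s := Real.log_le_log hs₀pos hs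
    have htpos : 0 < tF s := lt_of_lt_of_le one_pos (hT₀1.trans (htFspec s hs).1)
    have hexph : Real.exp (hh (Real.log s)) = tF s * s ^ (-(1/θ)) := by
      have e0 : Real.exp (Real.log s) = s := Real.exp_log hsp
      simp only [hhh, hℓ, max_eq_left hxx₀, e0]
      rw [Real.exp_sub, Real.exp_log htpos, Real.rpow_def_of_pos hsp, div_eq_mul_inv,
        ← Real.exp_neg]
      congr 1
      ring
    have hb := hHhh (Real.log s)
    obtain ⟨hb1, hb2⟩ := abs_le.1 hb
    have hss : s ^ (1/θ) * s ^ (-(1/θ)) = 1 := by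
      rw [← Real.rpow_add hsp]; simp
    constructor
    · have h1 : φF s ≤ Real.exp (3/θ) * (tF s * s ^ (-(1/θ))) := by
        rw [← hexph, hφF, ← Real.exp_add]
        exact Real.exp_le_exp.2 (by linarith)
      calc Real.exp (-(3/θ)) * s ^ (1/θ) * φF s
          ≤ Real.exp (-(3/θ)) * s ^ (1/θ) * (Real.exp (3/θ) * (tF s * s ^ (-(1/θ)))) := by
            apply mul_le_mul_of_nonneg_left h1 (by positivity)
      _ = (Real.exp (-(3/θ)) * Real.exp (3/θ)) * (s ^ (1/θ) * s ^ (-(1/θ))) * tF s := by ring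
      _ = tF s := by rw [hss, ← Real.exp_add]; simp
    · have h1 : Real.exp (-(3/θ)) * (tF s * s ^ (-(1/θ))) ≤ φF s := by
        rw [← hexph, hφF, ← Real.exp_add]
        exact Real.exp_le_exp.2 (by linarith)
      calc tF s = (Real.exp (3/θ) * Real.exp (-(3/θ))) * (s ^ (1/θ) * s ^ (-(1/θ))) * tF s := by
            rw [hss, ← Real.exp_add]; simp
      _ = Real.exp (3/θ) * s ^ (1/θ) * (Real.exp (-(3/θ)) * (tF s * s ^ (-(1/θ)))) := by ring
      _ ≤ Real.exp (3/θ) * s ^ (1/θ) * φF s := by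
            apply mul_le_mul_of_nonneg_left h1 (by positivity)
  refine ⟨s₀, hs₀1.le, tF, φF, φ'F, Real.exp (-(3/θ)), Real.exp_pos _,
    Real.exp (3/θ), Real.exp_pos _, ?_, fun s _ => Real.exp_pos _, hφFTC, hφint, htendφ, hcomp⟩
  intro s hs
  obtain ⟨h1, h2⟩ := htFspec s hs
  have ht1 : 1 ≤ tF s := hT₀1.trans h1
  refine ⟨ht1, ?_, ?_⟩
  · have h3 := h2
    simp only [hg] at h3
    rw [hveq _ ht1] at h3
    exact h3
  · intro t' ht' hgt'
    apply huniq s hs t' ht'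
    simp only [hg]
    rw [hveq _ ht']
    exact hgt'
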